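/- arXiv:1209.0741 — 3 statements merged into one kernel-verified Lean document; each statement's English description precedes it below -/
import Mathlib

section
/- Fix positive integers N, K, N_t; channel vectors h_{m,i,j} ∈ ℂ^{N_t} for m,i ∈ {1,…,N}, j ∈ {1,…,K}; positive semidefinite matrices Q_{i,k} ∈ ℂ^{N_t×N_t} and powers q_{i,k} > 0 for k ∈ {1,…,L_i}; δ ∈ [0,1]; noise power σ² ≥ 0; SINR targets Γ_{i,j} > 0; and functions η, ν : ℝ → ℝ that are nondecreasing on [0,∞) and convex on [0,∞). Then the set of tuples (β, (W_i)_{i=1}^N, (t_{i,n}), (r_{i,j})) ∈ ℝ × (ℂ^{N_t×K})^N × ℝ^{N·N_t} × ℝ^{N·K} satisfying, for all i, j, k, m, n: (a) t_{i,n} ≥ 0, r_{i,j} ≥ 0, Im(h_{i,i,j}ᴴ w_{i,j}) = 0; (b) Re tr(W_iᴴ Q_{i,k} W_i) + Σ_n δ Re tr(Q_{i,k} T_n) t_{i,n}² ≤ β q_{i,k}; (c) sqrt( Σ_m ‖h_{m,i,j}ᴴ W_m‖_F² + Σ_{m,n} |(h_{m,i,j})_n|² t_{m,n}² + r_{i,j}²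 + σ² ) ≤ sqrt(1 + 1/Γ_{i,j}) · Re(h_{i,i,j}ᴴ w_{i,j}); (d) η(‖T_n W_m‖_F) ≤ t_{m,n}; and (e) ν( sqrt(Σ_m ‖h_{m,i,j}ᴴ W_m‖_F²) ) ≤ r_{i,j}; is a convex subset of the real vector space ℝ × (ℂ^{N_t×K})^N × ℝ^{N·N_t} × ℝ^{N·K}. (Theorem 1, convexity part.) -/
open Matrix ComplexConjugate ComplexOrder

private lemma sqrt_sum_sq_comb {ι : Type*} [Fintype ι] (f g : ι → ℂ) {θ θ' : ℝ}
    (hθ : 0 ≤ θ) (hθ' : 0 ≤ θ') :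
    Real.sqrt (∑ i, ‖θ • f i + θ' • g i‖ ^ 2) ≤
      θ * Real.sqrt (∑ i, ‖f i‖ ^ 2)
      + θ' * Real.sqrt (∑ i, ‖g i‖ ^ 2) := by
  have key : ∀ v : ι → ℂ, Real.sqrt (∑ i, ‖v i‖ ^ 2)
      = ‖(WithLp.equiv 2 (ι → ℂ)).symm v‖ := by
    intro v
    rw [EuclideanSpace.norm_eq]
    simp
  rw [key, key, key]
  have heq : (WithLp.equiv 2 (ι → ℂ)).symm (fun i => θ • f i + θ' • g i)
      = θ • (WithLp.equiv 2 (ι → ℂ)).symm f + θ' • (WithLp.equiv 2 (ι → ℂ)).symm g := rfl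
  rw [heq]
  calc ‖θ • (WithLp.equiv 2 (ι → ℂ)).symm f + θ' • (WithLp.equiv 2 (ι → ℂ)).symm g‖
      ≤ ‖θ • (WithLp.equiv 2 (ι → ℂ)).symm f‖ + ‖θ' • (WithLp.equiv 2 (ι → ℂ)).symm g‖ :=
        norm_add_le _ _
    _ = θ * ‖(WithLp.equiv 2 (ι → ℂ)).symm f‖ + θ' * ‖(WithLp.equiv 2 (ι → ℂ)).symm g‖ := by
        rw [norm_smul, norm_smul, Real.norm_of_nonneg hθ, Real.norm_of_nonneg hθ']

private lemma diag_re_nonneg {n : ℕ} {M : Matrix (Fin n) (Fin n) ℂ} (hM : M.PosSemidef)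
    (i : Fin n) : 0 ≤ (M i i).re := by
  have := hM.re_dotProduct_nonneg (Pi.single i 1)
  simpa [dotProduct, Matrix.mulVec, Pi.single_apply, Finset.mul_sum] using this

private lemma trace_re_nonneg {n : ℕ} {M : Matrix (Fin n) (Fin n) ℂ} (hM : M.PosSemidef) :
    0 ≤ (Matrix.trace M).re := by
  rw [Matrix.trace, Complex.re_sum]
  exact Finset.sum_nonneg fun i _ => diag_re_nonneg hM i

private lemma trace_mul_std {n : ℕ} (M : Matrix (Fin n) (Fin n) ℂ) (i : Fin n) :
    Matrix.trace (M * Matrix.single i i 1) = M i i := by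
  simp [Matrix.trace, Matrix.diag, Matrix.mul_apply, Matrix.single, ite_and,
    Finset.sum_ite_eq]

private lemma trace_quad_comb {n k : ℕ} {Q : Matrix (Fin n) (Fin n) ℂ} (hQ : Q.PosSemidef)
    (A B : Matrix (Fin n) (Fin k) ℂ) {θ θ' : ℝ} (hθ : 0 ≤ θ) (hθ' : 0 ≤ θ') (hs : θ + θ' = 1) :
    (Matrix.trace ((θ • A + θ' • B)ᴴ * Q * (θ • A + θ' • B))).re
      ≤ θ * (Matrix.trace (Aᴴ * Q * A)).re + θ' * (Matrix.trace (Bᴴ * Q * B)).re := by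
  set a := (Matrix.trace (Aᴴ * Q * A)).re with ha
  set b := (Matrix.trace (Bᴴ * Q * B)).re with hb
  set cab := (Matrix.trace (Aᴴ * Q * B)).re with hcab
  set cba := (Matrix.trace (Bᴴ * Q * A)).re with hcba
  have hcross : cab + cba ≤ a + b := by
    have h0 := trace_re_nonneg (hQ.conjTranspose_mul_mul_same (A - B))
    have hexp : (Matrix.trace ((A - B)ᴴ * Q * (A - B))).re = a - cab - cba + b := by
      simp only [Matrix.conjTranspose_sub, Matrix.sub_mul, Matrix.mul_sub,
        Matrix.trace_sub, Complex.sub_re, ha, hb, hcab, hcba]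
      ring
    linarith [hexp ▸ h0]
  have hexp : (Matrix.trace ((θ • A + θ' • B)ᴴ * Q * (θ • A + θ' • B))).re
      = θ^2 * a + θ*θ'*cab + θ'*θ*cba + θ'^2*b := by
    simp only [Matrix.conjTranspose_add, Matrix.conjTranspose_smul, star_trivial,
      Matrix.add_mul, Matrix.mul_add, Matrix.smul_mul, Matrix.mul_smul,
      Matrix.trace_add, Matrix.trace_smul, Complex.add_re, Complex.smul_re,
      smul_smul, smul_eq_mul, ha, hb, hcab, hcba]
    ring
  rw [hexp]
  have hθ'' : θ' = 1 - θ := by linarith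
  subst hθ''
  nlinarith [mul_le_mul_of_nonneg_left hcross (mul_nonneg hθ hθ')]

/-- Theorem 1 (convexity part): under nondecreasing convex distortion functions
`η` (transmitter) and `ν` (receiver) on `[0,∞)`, the reformulated constraint set
(7)–(10) of the QoS power-minimization problem (P1) — in the variables
`(β, (W_i), (t_{i,n}), (r_{i,j}))` — is a convex subset of the real vector space
`ℝ × (ℂ^{N_t×K})^N × ℝ^{N·N_t} × ℝ^{N·K}`.  Here `T n = stdBasisMatrix n n 1`,
the `j`-th column of `W_i` is the beamforming vector `w_{i,j}`, and
`‖T_n W_m‖_F = √(∑_k |(W_m)_{n,k}|²)`. -/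
theorem stmt_6 {N K Nt : ℕ} (hN : 0 < N) (hK : 0 < K) (hNt : 0 < Nt)
    (h : Fin N → Fin N → Fin K → Fin Nt → ℂ)
    (L : Fin N → ℕ)
    (Q : (i : Fin N) → Fin (L i) → Matrix (Fin Nt) (Fin Nt) ℂ)
    (hQ : ∀ i k, (Q i k).PosSemidef)
    (q : (i : Fin N) → Fin (L i) → ℝ) (hq : ∀ i k, 0 < q i k)
    (δ : ℝ) (hδ : δ ∈ Set.Icc (0 : ℝ) 1)
    (σ2 : ℝ) (hσ : 0 ≤ σ2)
    (Γ : Fin N → Fin K → ℝ) (hΓ : ∀ i j, 0 < Γ i j)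
    (η ν : ℝ → ℝ)
    (hηmono : MonotoneOn η (Set.Ici 0)) (hηconv : ConvexOn ℝ (Set.Ici 0) η)
    (hνmono : MonotoneOn ν (Set.Ici 0)) (hνconv : ConvexOn ℝ (Set.Ici 0) ν) :
    Convex ℝ {x : ℝ × (Fin N → Matrix (Fin Nt) (Fin K) ℂ) ×
          (Fin N → Fin Nt → ℝ) × (Fin N → Fin K → ℝ) |
      -- (a) nonnegativity of the distortion bounds and real-valued useful signal
      (∀ i n, 0 ≤ x.2.2.1 i n) ∧ (∀ i j, 0 ≤ x.2.2.2 i j) ∧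
      (∀ i j, (∑ n, conj (h i i j n) * x.2.1 i n j).im = 0) ∧
      -- (b) power constraints: Re tr(W_iᴴ Q_{i,k} W_i) + ∑_n δ Re tr(Q_{i,k} T_n) t_{i,n}² ≤ β q_{i,k}
      (∀ i k, (Matrix.trace ((x.2.1 i)ᴴ * Q i k * x.2.1 i)).re
          + ∑ n, δ * (Matrix.trace (Q i k * Matrix.single n n (1 : ℂ))).re
              * x.2.2.1 i n ^ 2
        ≤ x.1 * q i k) ∧
      -- (c) second-order-cone SINR constraints
      (∀ i j,
        Real.sqrt ((∑ m, ∑ k, ‖∑ n, conj (h m i j n) * x.2.1 m n k‖ ^ 2)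
            + (∑ m, ∑ n, ‖h m i j n‖ ^ 2 * x.2.2.1 m n ^ 2)
            + x.2.2.2 i j ^ 2 + σ2)
          ≤ Real.sqrt (1 + 1 / Γ i j) * (∑ n, conj (h i i j n) * x.2.1 i n j).re) ∧
      -- (d) transmitter-distortion bounds: η(‖T_n W_m‖_F) ≤ t_{m,n}
      (∀ m n, η (Real.sqrt (∑ k, ‖x.2.1 m n k‖ ^ 2)) ≤ x.2.2.1 m n) ∧
      -- (e) receiver-distortion bounds
      (∀ i j, ν (Real.sqrt (∑ m, ∑ k,
          ‖∑ n, conj (h m i j n) * x.2.1 m n k‖ ^ 2)) ≤ x.2.2.2 i j)} := by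
  intro x hx y hy θ θ' hθ hθ' hs
  simp only [Set.mem_setOf_eq] at hx hy ⊢
  obtain ⟨hx1, hx2, hx3, hx4, hx5, hx6, hx7⟩ := hx
  obtain ⟨hy1, hy2, hy3, hy4, hy5, hy6, hy7⟩ := hy
  have hzβ : (θ • x + θ' • y).1 = θ * x.1 + θ' * y.1 := rfl
  have hzW : ∀ m, (θ • x + θ' • y).2.1 m = θ • x.2.1 m + θ' • y.2.1 m := fun _ => rfl
  have hzWe : ∀ m n kk, (θ • x + θ' • y).2.1 m n kk
      = θ • x.2.1 m n kk + θ' • y.2.1 m n kk := fun _ _ _ => rfl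
  have hzt : ∀ i n, (θ • x + θ' • y).2.2.1 i n
      = θ * x.2.2.1 i n + θ' * y.2.2.1 i n := fun _ _ => rfl
  have hzr : ∀ i j, (θ • x + θ' • y).2.2.2 i j
      = θ * x.2.2.2 i j + θ' * y.2.2.2 i j := fun _ _ => rfl
  have expand : ∀ (c : Fin Nt → ℂ) (m : Fin N) (kk : Fin K),
      (∑ n, c n * (θ • x + θ' • y).2.1 m n kk)
        = θ • (∑ n, c n * x.2.1 m n kk) + θ' • (∑ n, c n * y.2.1 m n kk) := by
    intro c m kk
    simp only [hzWe, mul_add, mul_smul_comm, Finset.sum_add_distrib, Finset.smul_sum]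
  refine ⟨?_, ?_, ?_, ?_, ?_, ?_, ?_⟩
  · intro i n
    rw [hzt]
    exact add_nonneg (mul_nonneg hθ (hx1 i n)) (mul_nonneg hθ' (hy1 i n))
  · intro i j
    rw [hzr]
    exact add_nonneg (mul_nonneg hθ (hx2 i j)) (mul_nonneg hθ' (hy2 i j))
  · intro i j
    rw [expand]
    simp [Complex.add_im, Complex.smul_im, hx3 i j, hy3 i j]
  · intro i k
    rw [hzβ, hzW]
    have htr := trace_quad_comb (hQ i k) (x.2.1 i) (y.2.1 i) hθ hθ' hs
    have htp : ∀ n : Fin Nt,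
        δ * (Matrix.trace (Q i k * Matrix.single n n (1:ℂ))).re
            * ((θ • x + θ' • y).2.2.1 i n) ^ 2
        ≤ θ * (δ * (Matrix.trace (Q i k * Matrix.single n n (1:ℂ))).re
              * x.2.2.1 i n ^ 2)
          + θ' * (δ * (Matrix.trace (Q i k * Matrix.single n n (1:ℂ))).re
              * y.2.2.1 i n ^ 2) := by
      intro n
      rw [hzt]
      have hc : 0 ≤ (Matrix.trace (Q i k * Matrix.single n n (1:ℂ))).re := by
        rw [trace_mul_std]; exact diag_re_nonneg (hQ i k) n
      have hsq : (θ * x.2.2.1 i n + θ' * y.2.2.1 i n)^2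
          ≤ θ * x.2.2.1 i n ^2 + θ' * y.2.2.1 i n ^2 := by
        nlinarith [sq_nonneg (x.2.2.1 i n - y.2.2.1 i n), mul_nonneg hθ hθ']
      nlinarith [mul_le_mul_of_nonneg_left hsq (mul_nonneg hδ.1 hc)]
    calc (Matrix.trace ((θ • x.2.1 i + θ' • y.2.1 i)ᴴ * Q i k
            * (θ • x.2.1 i + θ' • y.2.1 i))).re
        + ∑ n, δ * (Matrix.trace (Q i k * Matrix.single n n (1:ℂ))).re
            * ((θ • x + θ' • y).2.2.1 i n) ^ 2
        ≤ (θ * (Matrix.trace ((x.2.1 i)ᴴ * Q i k * x.2.1 i)).re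
            + θ' * (Matrix.trace ((y.2.1 i)ᴴ * Q i k * y.2.1 i)).re)
          + ∑ n, (θ * (δ * (Matrix.trace (Q i k * Matrix.single n n (1:ℂ))).re
              * x.2.2.1 i n ^ 2)
            + θ' * (δ * (Matrix.trace (Q i k * Matrix.single n n (1:ℂ))).re
              * y.2.2.1 i n ^ 2)) :=
          add_le_add htr (Finset.sum_le_sum fun n _ => htp n)
      _ = θ * ((Matrix.trace ((x.2.1 i)ᴴ * Q i k * x.2.1 i)).re
            + ∑ n, δ * (Matrix.trace (Q i k * Matrix.single n n (1:ℂ))).re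
              * x.2.2.1 i n ^ 2)
          + θ' * ((Matrix.trace ((y.2.1 i)ᴴ * Q i k * y.2.1 i)).re
            + ∑ n, δ * (Matrix.trace (Q i k * Matrix.single n n (1:ℂ))).re
              * y.2.2.1 i n ^ 2) := by
          rw [Finset.sum_add_distrib, ← Finset.mul_sum, ← Finset.mul_sum]; ring
      _ ≤ θ * (x.1 * q i k) + θ' * (y.1 * q i k) :=
          add_le_add (mul_le_mul_of_nonneg_left (hx4 i k) hθ)
            (mul_le_mul_of_nonneg_left (hy4 i k) hθ')
      _ = (θ * x.1 + θ' * y.1) * q i k := by ring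
  · intro i j
    set F : ((Fin N × Fin K) ⊕ ((Fin N × Fin Nt) ⊕ Fin 2)) → ℂ :=
      Sum.elim (fun p => ∑ n, conj (h p.1 i j n) * x.2.1 p.1 n p.2)
        (Sum.elim (fun p => ((‖h p.1 i j p.2‖ * x.2.2.1 p.1 p.2 : ℝ) : ℂ))
          ![((x.2.2.2 i j : ℝ) : ℂ), ((Real.sqrt σ2 : ℝ) : ℂ)]) with hF
    set G : ((Fin N × Fin K) ⊕ ((Fin N × Fin Nt) ⊕ Fin 2)) → ℂ :=
      Sum.elim (fun p => ∑ n, conj (h p.1 i j n) * y.2.1 p.1 n p.2)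
        (Sum.elim (fun p => ((‖h p.1 i j p.2‖ * y.2.2.1 p.1 p.2 : ℝ) : ℂ))
          ![((y.2.2.2 i j : ℝ) : ℂ), ((Real.sqrt σ2 : ℝ) : ℂ)]) with hG
    have hA : ∀ (m : Fin N) (kk : Fin K),
        ‖∑ n, conj (h m i j n) * (θ • x + θ' • y).2.1 m n kk‖ ^ 2
        = ‖θ • (∑ n, conj (h m i j n) * x.2.1 m n kk)
            + θ' • (∑ n, conj (h m i j n) * y.2.1 m n kk)‖ ^ 2 := by
      intro m kk; rw [expand]
    have hB : ∀ (m : Fin N) (n : Fin Nt),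
        ‖h m i j n‖ ^ 2 * ((θ • x + θ' • y).2.2.1 m n) ^ 2
        = ‖θ • ((‖h m i j n‖ * x.2.2.1 m n : ℝ) : ℂ)
            + θ' • ((‖h m i j n‖ * y.2.2.1 m n : ℝ) : ℂ)‖ ^ 2 := by
      intro m n
      rw [hzt]
      simp only [Complex.real_smul, ← Complex.ofReal_mul, ← Complex.ofReal_add,
        Complex.norm_real, Real.norm_eq_abs, _root_.sq_abs]
      ring
    have hr' : ((θ • x + θ' • y).2.2.2 i j) ^ 2
        = ‖θ • ((x.2.2.2 i j : ℝ) : ℂ) + θ' • ((y.2.2.2 i j : ℝ) : ℂ)‖ ^ 2 := by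
      rw [hzr]
      simp only [Complex.real_smul, ← Complex.ofReal_mul, ← Complex.ofReal_add,
        Complex.norm_real, Real.norm_eq_abs, _root_.sq_abs]
    have hσ' : σ2
        = ‖θ • ((Real.sqrt σ2 : ℝ) : ℂ) + θ' • ((Real.sqrt σ2 : ℝ) : ℂ)‖ ^ 2 := by
      simp only [Complex.real_smul, ← Complex.ofReal_mul, ← Complex.ofReal_add,
        Complex.norm_real, Real.norm_eq_abs, _root_.sq_abs]
      rw [← add_mul, hs, one_mul, Real.sq_sqrt hσ]
    have hFsum : ∑ i', ‖F i'‖ ^ 2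
        = (∑ m, ∑ k, ‖∑ n, conj (h m i j n) * x.2.1 m n k‖ ^ 2)
          + (∑ m, ∑ n, ‖h m i j n‖ ^ 2 * x.2.2.1 m n ^ 2)
          + x.2.2.2 i j ^ 2 + σ2 := by
      rw [hF, Fintype.sum_sum_type, Fintype.sum_sum_type, Fin.sum_univ_two,
        Fintype.sum_prod_type, Fintype.sum_prod_type]
      simp only [Sum.elim_inl, Sum.elim_inr, Matrix.cons_val_zero, Matrix.cons_val_one,
        Matrix.head_cons, Complex.norm_real, Real.norm_eq_abs, _root_.sq_abs, mul_pow, Real.sq_sqrt hσ]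
      ring
    have hGsum : ∑ i', ‖G i'‖ ^ 2
        = (∑ m, ∑ k, ‖∑ n, conj (h m i j n) * y.2.1 m n k‖ ^ 2)
          + (∑ m, ∑ n, ‖h m i j n‖ ^ 2 * y.2.2.1 m n ^ 2)
          + y.2.2.2 i j ^ 2 + σ2 := by
      rw [hG, Fintype.sum_sum_type, Fintype.sum_sum_type, Fin.sum_univ_two,
        Fintype.sum_prod_type, Fintype.sum_prod_type]
      simp only [Sum.elim_inl, Sum.elim_inr, Matrix.cons_val_zero, Matrix.cons_val_one,
        Matrix.head_cons, Complex.norm_real, Real.norm_eq_abs, _root_.sq_abs, mul_pow, Real.sq_sqrt hσ]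
      ring
    have hcomb : (∑ m, ∑ k, ‖∑ n, conj (h m i j n)
            * (θ • x + θ' • y).2.1 m n k‖ ^ 2)
          + (∑ m, ∑ n, ‖h m i j n‖ ^ 2 * ((θ • x + θ' • y).2.2.1 m n) ^ 2)
          + ((θ • x + θ' • y).2.2.2 i j) ^ 2 + σ2
        = ∑ i', ‖θ • F i' + θ' • G i'‖ ^ 2 := by
      rw [hF, hG, Fintype.sum_sum_type, Fintype.sum_sum_type, Fin.sum_univ_two,
        Fintype.sum_prod_type, Fintype.sum_prod_type]
      simp only [Sum.elim_inl, Sum.elim_inr, Matrix.cons_val_zero, Matrix.cons_val_one,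
        Matrix.head_cons]
      simp only [hA, hB]
      rw [hr', ← hσ']
      ring
    have hkey := sqrt_sum_sq_comb F G hθ hθ'
    rw [hFsum, hGsum] at hkey
    calc Real.sqrt ((∑ m, ∑ k, ‖∑ n, conj (h m i j n)
            * (θ • x + θ' • y).2.1 m n k‖ ^ 2)
          + (∑ m, ∑ n, ‖h m i j n‖ ^ 2 * ((θ • x + θ' • y).2.2.1 m n) ^ 2)
          + ((θ • x + θ' • y).2.2.2 i j) ^ 2 + σ2)
        = Real.sqrt (∑ i', ‖θ • F i' + θ' • G i'‖ ^ 2) := by rw [hcomb]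
      _ ≤ θ * Real.sqrt ((∑ m, ∑ k, ‖∑ n, conj (h m i j n) * x.2.1 m n k‖ ^ 2)
            + (∑ m, ∑ n, ‖h m i j n‖ ^ 2 * x.2.2.1 m n ^ 2)
            + x.2.2.2 i j ^ 2 + σ2)
          + θ' * Real.sqrt ((∑ m, ∑ k, ‖∑ n, conj (h m i j n) * y.2.1 m n k‖ ^ 2)
            + (∑ m, ∑ n, ‖h m i j n‖ ^ 2 * y.2.2.1 m n ^ 2)
            + y.2.2.2 i j ^ 2 + σ2) := hkey
      _ ≤ θ * (Real.sqrt (1 + 1 / Γ i j) * (∑ n, conj (h i i j n) * x.2.1 i n j).re)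
          + θ' * (Real.sqrt (1 + 1 / Γ i j) * (∑ n, conj (h i i j n) * y.2.1 i n j).re) :=
          add_le_add (mul_le_mul_of_nonneg_left (hx5 i j) hθ)
            (mul_le_mul_of_nonneg_left (hy5 i j) hθ')
      _ = Real.sqrt (1 + 1 / Γ i j)
            * (∑ n, conj (h i i j n) * (θ • x + θ' • y).2.1 i n j).re := by
          rw [expand]
          simp only [Complex.add_re, Complex.smul_re, smul_eq_mul]
          ring
  · intro m n
    rw [hzt]
    have hAx : 0 ≤ Real.sqrt (∑ k, ‖x.2.1 m n k‖ ^ 2) := Real.sqrt_nonneg _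
    have hAy : 0 ≤ Real.sqrt (∑ k, ‖y.2.1 m n k‖ ^ 2) := Real.sqrt_nonneg _
    have h1 : Real.sqrt (∑ k, ‖(θ • x + θ' • y).2.1 m n k‖ ^ 2)
        ≤ θ * Real.sqrt (∑ k, ‖x.2.1 m n k‖ ^ 2)
          + θ' * Real.sqrt (∑ k, ‖y.2.1 m n k‖ ^ 2) := by
      simp only [hzWe]
      exact sqrt_sum_sq_comb _ _ hθ hθ'
    have h2 := hηmono (Set.mem_Ici.2 (Real.sqrt_nonneg _))
      (Set.mem_Ici.2 (add_nonneg (mul_nonneg hθ hAx) (mul_nonneg hθ' hAy))) h1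
    have h3 := hηconv.2 (Set.mem_Ici.2 hAx) (Set.mem_Ici.2 hAy) hθ hθ' hs
    simp only [smul_eq_mul] at h3
    have h4 := mul_le_mul_of_nonneg_left (hx6 m n) hθ
    have h5 := mul_le_mul_of_nonneg_left (hy6 m n) hθ'
    linarith
  · intro i j
    rw [hzr]
    set F : Fin N × Fin K → ℂ :=
      fun p => ∑ n, conj (h p.1 i j n) * x.2.1 p.1 n p.2 with hF
    set G : Fin N × Fin K → ℂ :=
      fun p => ∑ n, conj (h p.1 i j n) * y.2.1 p.1 n p.2 with hG
    have hFsum : ∑ p, ‖F p‖ ^ 2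
        = ∑ m, ∑ k, ‖∑ n, conj (h m i j n) * x.2.1 m n k‖ ^ 2 := by
      rw [hF, Fintype.sum_prod_type]
    have hGsum : ∑ p, ‖G p‖ ^ 2
        = ∑ m, ∑ k, ‖∑ n, conj (h m i j n) * y.2.1 m n k‖ ^ 2 := by
      rw [hG, Fintype.sum_prod_type]
    have hcomb : (∑ m, ∑ k, ‖∑ n, conj (h m i j n)
            * (θ • x + θ' • y).2.1 m n k‖ ^ 2)
        = ∑ p, ‖θ • F p + θ' • G p‖ ^ 2 := by
      rw [hF, hG, Fintype.sum_prod_type]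
      simp only [expand]
    have hkey := sqrt_sum_sq_comb F G hθ hθ'
    rw [hFsum, hGsum] at hkey
    have hAx : 0 ≤ Real.sqrt (∑ m, ∑ k,
        ‖∑ n, conj (h m i j n) * x.2.1 m n k‖ ^ 2) := Real.sqrt_nonneg _
    have hAy : 0 ≤ Real.sqrt (∑ m, ∑ k,
        ‖∑ n, conj (h m i j n) * y.2.1 m n k‖ ^ 2) := Real.sqrt_nonneg _
    have h1 : Real.sqrt (∑ m, ∑ k, ‖∑ n, conj (h m i j n)
            * (θ • x + θ' • y).2.1 m n k‖ ^ 2)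
        ≤ θ * Real.sqrt (∑ m, ∑ k, ‖∑ n, conj (h m i j n) * x.2.1 m n k‖ ^ 2)
          + θ' * Real.sqrt (∑ m, ∑ k,
              ‖∑ n, conj (h m i j n) * y.2.1 m n k‖ ^ 2) := by
      rw [hcomb]; exact hkey
    have h2 := hνmono (Set.mem_Ici.2 (Real.sqrt_nonneg _))
      (Set.mem_Ici.2 (add_nonneg (mul_nonneg hθ hAx) (mul_nonneg hθ' hAy))) h1
    have h3 := hνconv.2 (Set.mem_Ici.2 hAx) (Set.mem_Ici.2 hAy) hθ hθ' hs
    simp only [smul_eq_mul] at h3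
    have h4 := mul_le_mul_of_nonneg_left (hx7 i j) hθ
    have h5 := mul_le_mul_of_nonneg_left (hy7 i j) hθ'
    linarith
end

section
/- Fix positive integers N, K, N_t; channel vectors h_{m,i,j} ∈ ℂ^{N_t}; positive semidefinite matrices Q_{i,k} and powers q_{i,k} > 0; δ ∈ [0,1]; noise power σ² > 0; SINR targets Γ_{i,j} > 0; and functions η, ν : ℝ → ℝ that are nonnegative and nondecreasing on [0,∞). Then the infimum of β over all (β, (W_i)_{i=1}^N) such that SINR_{i,j} ≥ Γ_{i,j} for all i, j and Re tr(W_iᴴ Q_{i,k} W_i) + Σ_n δ Re tr(Q_{i,k} T_n) η(‖T_n W_i‖_F)² ≤ β q_{i,k} for all i, k, equals the infimum of β over all tuples (β, (W_i), (t_{i,n}), (r_{i,j})) satisfying the reformulated constraints: t_{i,n} ≥ 0, r_{i,j} ≥ 0, Im(h_{i,i,j}ᴴ w_{i,j}) = 0, Re tr(W_iᴴ Q_{i,k} W_i) + Σ_n δ Re tr(Q_{i,k} T_n) t_{i,n}² ≤ β q_{i,k}, sqrt(Σ_m ‖h_{m,i,j}ᴴ W_m‖_F² + Σ_{m,n} |(h_{m,i,j})_n|²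 t_{m,n}² + r_{i,j}² + σ²) ≤ sqrt(1 + 1/Γ_{i,j}) · Re(h_{i,i,j}ᴴ w_{i,j}), η(‖T_n W_m‖_F) ≤ t_{m,n}, and ν(sqrt(Σ_m ‖h_{m,i,j}ᴴ W_m‖_F²)) ≤ r_{i,j}. (Theorem 1, equivalence part.) -/
open scoped ComplexConjugate

/-- Conjugate inner product `hᴴ x = ∑ₙ conj(hₙ) xₙ`. -/
noncomputable def dotc {Nt : ℕ} (h x : Fin Nt → ℂ) : ℂ :=
  ∑ n, conj (h n) * x n

/-- `‖Tₙ W‖_F = √(∑ₖ |Wₙₖ|²)`: the transmit magnitude at antenna `n`. -/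
noncomputable def rowNorm {Nt K : ℕ} (W : Matrix (Fin Nt) (Fin K) ℂ) (n : Fin Nt) : ℝ :=
  Real.sqrt (∑ k, ‖W n k‖ ^ 2)

/-- Total received signal power `∑ₘ ‖h_{m,i,j}ᴴ W_m‖_F²` at user `j` of cell `i`. -/
noncomputable def sigPow {N K Nt : ℕ} (h : Fin N → Fin N → Fin K → Fin Nt → ℂ)
    (W : Fin N → Matrix (Fin Nt) (Fin K) ℂ) (i : Fin N) (j : Fin K) : ℝ :=
  ∑ m, ∑ k, ‖dotc (h m i j) (fun n => W m n k)‖ ^ 2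

/-- The SINR of user `j` in cell `i` under transceiver impairments, with
transmitter distortion function `η`, receiver distortion function `ν`, and
thermal noise power `σ2`. -/
noncomputable def SINR {N K Nt : ℕ} (η ν : ℝ → ℝ) (σ2 : ℝ)
    (h : Fin N → Fin N → Fin K → Fin Nt → ℂ)
    (W : Fin N → Matrix (Fin Nt) (Fin K) ℂ) (i : Fin N) (j : Fin K) : ℝ :=
  ‖dotc (h i i j) (fun n => W i n j)‖ ^ 2 /
    ((∑ l ∈ Finset.univ.filter (fun l => l ≠ j),
        ‖dotc (h i i j) (fun n => W i n l)‖ ^ 2)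
      + (∑ m ∈ Finset.univ.filter (fun m => m ≠ i),
          ∑ k, ‖dotc (h m i j) (fun n => W m n k)‖ ^ 2)
      + (∑ m, ∑ n, ‖h m i j n‖ ^ 2 * η (rowNorm (W m) n) ^ 2)
      + (σ2 + ν (Real.sqrt (sigPow h W i j)) ^ 2))

open Matrix ComplexOrder

/-- Auxiliary: `dotc` is linear under scalar multiplication of the second argument. -/
lemma aux_dotc_smul {Nt : ℕ} (h w : Fin Nt → ℂ) (e : ℂ) :
    dotc h (fun n => e * w n) = e * dotc h w := by
  simp only [dotc, Finset.mul_sum]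
  exact Finset.sum_congr rfl fun n _ => by ring

/-- Auxiliary: existence of a unit phase rotating a complex number to its absolute value. -/
lemma aux_phase (c : ℂ) : ∃ e : ℂ, Complex.normSq e = 1 ∧ e * c = (‖c‖ : ℂ) := by
  rcases eq_or_ne c 0 with rfl | hc
  · exact ⟨1, by simp, by simp⟩
  · have habs : (‖c‖ : ℝ) ≠ 0 := by simpa using hc
    refine ⟨conj c / (‖c‖ : ℂ), ?_, ?_⟩
    · simp [Complex.normSq_div, Complex.normSq_conj, Complex.normSq_ofReal, Complex.normSq_eq_norm_sq,
        pow_two, habs]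
    · rw [div_mul_eq_mul_div, ← Complex.normSq_eq_conj_mul_self, Complex.normSq_eq_norm_sq]
      push_cast
      field_simp

/-- Auxiliary: `tr(WᴴQW)` is invariant under multiplying each column of `W` by a unit phase. -/
lemma aux_trace_phase {Nt K : ℕ} (Q : Matrix (Fin Nt) (Fin Nt) ℂ)
    (A : Matrix (Fin Nt) (Fin K) ℂ) (e : Fin K → ℂ) (he : ∀ k, Complex.normSq (e k) = 1) :
    Matrix.trace ((Matrix.of fun n k => e k * A n k)ᴴ * Q * (Matrix.of fun n k => e k * A n k))
      = Matrix.trace (Aᴴ * Q * A) := by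
  unfold Matrix.trace
  refine Finset.sum_congr rfl fun k _ => ?_
  simp only [Matrix.diag_apply, Matrix.mul_apply, Matrix.conjTranspose_apply, Matrix.of_apply,
    Finset.sum_mul, Complex.star_def, _root_.map_mul]
  refine Finset.sum_congr rfl fun p _ => Finset.sum_congr rfl fun n _ => ?_
  have h1 : conj (e k) * e k = 1 := by
    rw [← Complex.normSq_eq_conj_mul_self, he k]; norm_num
  linear_combination (conj (A n k) * Q n p * A p k) * h1

/-- Auxiliary: trace against a diagonal standard basis matrix picks out a diagonal entry. -/
lemma aux_trace_stdBasis {Nt : ℕ} (Q : Matrix (Fin Nt) (Fin Nt) ℂ) (n : Fin Nt) :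
    Matrix.trace (Q * Matrix.single n n (1 : ℂ)) = Q n n := by
  simp [Matrix.trace, Matrix.diag, Matrix.mul_apply, Matrix.single,
    Finset.sum_ite_eq, ite_and]

/-- Auxiliary: diagonal entries of a PSD matrix have nonnegative real part. -/
lemma aux_psd_diag_re {Nt : ℕ} (Q : Matrix (Fin Nt) (Fin Nt) ℂ) (hQ : Q.PosSemidef)
    (n : Fin Nt) : 0 ≤ (Q n n).re := by
  have := hQ.re_dotProduct_nonneg (Pi.single n 1)
  simpa [dotProduct, Matrix.mulVec, Pi.single_apply, Finset.sum_ite_eq] using this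

/-- Auxiliary: decomposition of the total received power into the desired signal,
intracell interference and intercell interference. -/
lemma aux_sigPow_decomp {N K Nt : ℕ} (h : Fin N → Fin N → Fin K → Fin Nt → ℂ)
    (W : Fin N → Matrix (Fin Nt) (Fin K) ℂ) (i : Fin N) (j : Fin K) :
    sigPow h W i j = ‖dotc (h i i j) (fun n => W i n j)‖ ^ 2
      + (∑ l ∈ Finset.univ.filter (fun l => l ≠ j),
          ‖dotc (h i i j) (fun n => W i n l)‖ ^ 2)
      + (∑ m ∈ Finset.univ.filter (fun m => m ≠ i),
          ∑ k, ‖dotc (h m i j) (fun n => W m n k)‖ ^ 2) := by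
  unfold sigPow
  rw [Finset.filter_ne', Finset.filter_ne',
    ← Finset.sum_erase_add _ _ (Finset.mem_univ i),
    ← Finset.sum_erase_add (Finset.univ : Finset (Fin K))
      (fun k => ‖dotc (h i i j) (fun n => W i n k)‖ ^ 2) (Finset.mem_univ j)]
  ring

/-- Theorem 1 (equivalence part): the optimal power-scaling value of the QoS
problem (P1) — the infimum of `β` subject to the SINR constraints
`SINR_{i,j} ≥ Γ_{i,j}` and the power constraints
`Re tr(W_iᴴ Q_{i,k} W_i) + ∑_n δ Re tr(Q_{i,k} T_n) η(‖T_n W_i‖_F)² ≤ β q_{i,k}` —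
coincides with the infimum of `β` over the convex reformulation (7)–(10) in the
auxiliary variables `t_{i,n}` (transmitter distortion bounds) and
`r_{i,j}` (receiver distortion bounds). -/
theorem stmt_7 {N K Nt : ℕ} (hN : 0 < N) (hK : 0 < K) (hNt : 0 < Nt)
    (h : Fin N → Fin N → Fin K → Fin Nt → ℂ)
    (L : Fin N → ℕ)
    (Q : (i : Fin N) → Fin (L i) → Matrix (Fin Nt) (Fin Nt) ℂ)
    (hQ : ∀ i k, (Q i k).PosSemidef)
    (q : (i : Fin N) → Fin (L i) → ℝ) (hq : ∀ i k, 0 < q i k)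
    (δ : ℝ) (hδ : δ ∈ Set.Icc (0 : ℝ) 1)
    (σ2 : ℝ) (hσ : 0 < σ2)
    (Γ : Fin N → Fin K → ℝ) (hΓ : ∀ i j, 0 < Γ i j)
    (η ν : ℝ → ℝ)
    (hη0 : ∀ x ∈ Set.Ici (0 : ℝ), 0 ≤ η x) (hηmono : MonotoneOn η (Set.Ici 0))
    (hν0 : ∀ x ∈ Set.Ici (0 : ℝ), 0 ≤ ν x) (hνmono : MonotoneOn ν (Set.Ici 0)) :
    sInf {β : ℝ | ∃ W : Fin N → Matrix (Fin Nt) (Fin K) ℂ,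
        (∀ i j, Γ i j ≤ SINR η ν σ2 h W i j) ∧
        (∀ i k, (Matrix.trace ((W i)ᴴ * Q i k * W i)).re
            + ∑ n, δ * (Matrix.trace (Q i k * Matrix.single n n (1 : ℂ))).re
                * η (rowNorm (W i) n) ^ 2
          ≤ β * q i k)} =
    sInf {β : ℝ | ∃ (W : Fin N → Matrix (Fin Nt) (Fin K) ℂ)
        (t : Fin N → Fin Nt → ℝ) (r : Fin N → Fin K → ℝ),
        (∀ i n, 0 ≤ t i n) ∧ (∀ i j, 0 ≤ r i j) ∧
        (∀ i j, (dotc (h i i j) (fun n => W i n j)).im = 0) ∧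
        (∀ i k, (Matrix.trace ((W i)ᴴ * Q i k * W i)).re
            + ∑ n, δ * (Matrix.trace (Q i k * Matrix.single n n (1 : ℂ))).re
                * t i n ^ 2
          ≤ β * q i k) ∧
        (∀ i j, Real.sqrt (sigPow h W i j
              + (∑ m, ∑ n, ‖h m i j n‖ ^ 2 * t m n ^ 2)
              + r i j ^ 2 + σ2)
          ≤ Real.sqrt (1 + 1 / Γ i j) * (dotc (h i i j) (fun n => W i n j)).re) ∧
        (∀ m n, η (rowNorm (W m) n) ≤ t m n) ∧
        (∀ i j, ν (Real.sqrt (sigPow h W i j)) ≤ r i j)} := by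
  congr 1
  ext β
  simp only [Set.mem_setOf_eq]
  constructor
  · -- (P1) feasible ⇒ reformulation feasible, via a phase rotation of each beam
    rintro ⟨W, hS, hP⟩
    choose e he1 he2 using fun (i : Fin N) (k : Fin K) =>
      aux_phase (dotc (h i i k) (fun n => W i n k))
    set W' : Fin N → Matrix (Fin Nt) (Fin K) ℂ :=
      fun i => Matrix.of fun n k => e i k * W i n k with hW'
    have habse : ∀ i k, ‖e i k‖ = 1 := fun i k => by
      rw [Complex.norm_def, he1 i k, Real.sqrt_one]
    have hdot : ∀ m i j k, dotc (h m i j) (fun n => W' m n k)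
        = e m k * dotc (h m i j) (fun n => W m n k) := fun m i j k =>
      aux_dotc_smul (h m i j) (fun n => W m n k) (e m k)
    have habsdot : ∀ m i j k, ‖dotc (h m i j) (fun n => W' m n k)‖
        = ‖dotc (h m i j) (fun n => W m n k)‖ := fun m i j k => by
      rw [hdot, norm_mul, habse, one_mul]
    have hrow : ∀ m n, rowNorm (W' m) n = rowNorm (W m) n := fun m n => by
      unfold rowNorm
      congr 1
      refine Finset.sum_congr rfl fun k _ => ?_
      show ‖e m k * W m n k‖ ^ 2 = _
      rw [norm_mul, habse, one_mul]
    have hsig : ∀ i j, sigPow h W' i j = sigPow h W i j := fun i j => by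
      unfold sigPow
      exact Finset.sum_congr rfl fun m _ => Finset.sum_congr rfl fun k _ => by
        rw [habsdot]
    refine ⟨W', fun m n => η (rowNorm (W m) n), fun i j => ν (Real.sqrt (sigPow h W i j)),
      fun m n => hη0 _ (Real.sqrt_nonneg _), fun i j => hν0 _ (Real.sqrt_nonneg _),
      ?_, ?_, ?_, fun m n => le_of_eq (by rw [hrow m n]), fun i j => le_of_eq (by rw [hsig i j])⟩
    · -- imaginary part vanishes after the rotation
      intro i j
      rw [hdot, he2]
      exact Complex.ofReal_im _
    · -- power constraints are phase invariant
      intro i k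
      have htr : Matrix.trace ((W' i)ᴴ * Q i k * W' i)
          = Matrix.trace ((W i)ᴴ * Q i k * W i) :=
        aux_trace_phase (Q i k) (W i) (e i) (he1 i)
      have := hP i k
      rw [htr]
      exact this
    · -- the second-order-cone constraint (8)
      intro i j
      beta_reduce
      rw [hsig i j, hdot i i j j, he2 i j, Complex.ofReal_re]
      -- now everything is in terms of `W`
      have hI1 : (0:ℝ) ≤ ∑ l ∈ Finset.univ.filter (fun l => l ≠ j),
          ‖dotc (h i i j) (fun n => W i n l)‖ ^ 2 :=
        Finset.sum_nonneg fun _ _ => sq_nonneg _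
      have hI2 : (0:ℝ) ≤ ∑ m ∈ Finset.univ.filter (fun m => m ≠ i),
          ∑ k, ‖dotc (h m i j) (fun n => W m n k)‖ ^ 2 :=
        Finset.sum_nonneg fun _ _ => Finset.sum_nonneg fun _ _ => sq_nonneg _
      have hD : (0:ℝ) ≤ ∑ m, ∑ n, ‖h m i j n‖ ^ 2 * η (rowNorm (W m) n) ^ 2 :=
        Finset.sum_nonneg fun _ _ => Finset.sum_nonneg fun _ _ =>
          mul_nonneg (sq_nonneg _) (sq_nonneg _)
      have hν2 : (0:ℝ) ≤ ν (Real.sqrt (sigPow h W i j)) ^ 2 := sq_nonneg _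
      have hden : (0:ℝ) < (∑ l ∈ Finset.univ.filter (fun l => l ≠ j),
            ‖dotc (h i i j) (fun n => W i n l)‖ ^ 2)
          + (∑ m ∈ Finset.univ.filter (fun m => m ≠ i),
              ∑ k, ‖dotc (h m i j) (fun n => W m n k)‖ ^ 2)
          + (∑ m, ∑ n, ‖h m i j n‖ ^ 2 * η (rowNorm (W m) n) ^ 2)
          + (σ2 + ν (Real.sqrt (sigPow h W i j)) ^ 2) := by linarith
      have hΓden := hS i j
      rw [SINR, le_div_iff₀ hden] at hΓden
      have hdle : (∑ l ∈ Finset.univ.filter (fun l => l ≠ j),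
            ‖dotc (h i i j) (fun n => W i n l)‖ ^ 2)
          + (∑ m ∈ Finset.univ.filter (fun m => m ≠ i),
              ∑ k, ‖dotc (h m i j) (fun n => W m n k)‖ ^ 2)
          + (∑ m, ∑ n, ‖h m i j n‖ ^ 2 * η (rowNorm (W m) n) ^ 2)
          + (σ2 + ν (Real.sqrt (sigPow h W i j)) ^ 2)
          ≤ ‖dotc (h i i j) (fun n => W i n j)‖ ^ 2 / Γ i j := by
        rw [le_div_iff₀ (hΓ i j)]
        nlinarith [hΓden]
      have hdecomp := aux_sigPow_decomp h W i j
      have heq : (1 + 1 / Γ i j) * ‖dotc (h i i j) (fun n => W i n j)‖ ^ 2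
          = ‖dotc (h i i j) (fun n => W i n j)‖ ^ 2
            + ‖dotc (h i i j) (fun n => W i n j)‖ ^ 2 / Γ i j := by
        have hgne : Γ i j ≠ 0 := (hΓ i j).ne'
        field_simp
      have hX : sigPow h W i j
            + (∑ m, ∑ n, ‖h m i j n‖ ^ 2 * η (rowNorm (W m) n) ^ 2)
            + ν (Real.sqrt (sigPow h W i j)) ^ 2 + σ2
          ≤ (1 + 1 / Γ i j) * ‖dotc (h i i j) (fun n => W i n j)‖ ^ 2 := by
        rw [heq]
        linarith
      refine le_trans (Real.sqrt_le_sqrt hX) (le_of_eq ?_)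
      have h1Γ : (0:ℝ) ≤ 1 + 1 / Γ i j :=
        le_of_lt (add_pos one_pos (one_div_pos.2 (hΓ i j)))
      rw [Real.sqrt_mul h1Γ, Real.sqrt_sq (norm_nonneg _)]
  · -- reformulation feasible ⇒ (P1) feasible with the same beamformers
    rintro ⟨W, t, r, ht0, hr0, hIm, hP, hC, hηt, hνr⟩
    have hη_nonneg : ∀ m n, 0 ≤ η (rowNorm (W m) n) := fun m n =>
      hη0 _ (Real.sqrt_nonneg _)
    have hν_nonneg : ∀ i j, 0 ≤ ν (Real.sqrt (sigPow h W i j)) := fun i j =>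
      hν0 _ (Real.sqrt_nonneg _)
    refine ⟨W, ?_, ?_⟩
    · -- SINR constraints
      intro i j
      have hI1 : (0:ℝ) ≤ ∑ l ∈ Finset.univ.filter (fun l => l ≠ j),
          ‖dotc (h i i j) (fun n => W i n l)‖ ^ 2 :=
        Finset.sum_nonneg fun _ _ => sq_nonneg _
      have hI2 : (0:ℝ) ≤ ∑ m ∈ Finset.univ.filter (fun m => m ≠ i),
          ∑ k, ‖dotc (h m i j) (fun n => W m n k)‖ ^ 2 :=
        Finset.sum_nonneg fun _ _ => Finset.sum_nonneg fun _ _ => sq_nonneg _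
      have hD : (0:ℝ) ≤ ∑ m, ∑ n, ‖h m i j n‖ ^ 2 * η (rowNorm (W m) n) ^ 2 :=
        Finset.sum_nonneg fun _ _ => Finset.sum_nonneg fun _ _ =>
          mul_nonneg (sq_nonneg _) (sq_nonneg _)
      have hν2 : (0:ℝ) ≤ ν (Real.sqrt (sigPow h W i j)) ^ 2 := sq_nonneg _
      have hden : (0:ℝ) < (∑ l ∈ Finset.univ.filter (fun l => l ≠ j),
            ‖dotc (h i i j) (fun n => W i n l)‖ ^ 2)
          + (∑ m ∈ Finset.univ.filter (fun m => m ≠ i),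
              ∑ k, ‖dotc (h m i j) (fun n => W m n k)‖ ^ 2)
          + (∑ m, ∑ n, ‖h m i j n‖ ^ 2 * η (rowNorm (W m) n) ^ 2)
          + (σ2 + ν (Real.sqrt (sigPow h W i j)) ^ 2) := by linarith
      -- |c|² = Re(c)²
      have hS2 : ‖dotc (h i i j) (fun n => W i n j)‖ ^ 2
          = (dotc (h i i j) (fun n => W i n j)).re ^ 2 := by
        rw [Complex.sq_norm, Complex.normSq_apply, hIm i j]; ring
      -- distortion bounds
      have hDT : (∑ m, ∑ n, ‖h m i j n‖ ^ 2 * η (rowNorm (W m) n) ^ 2)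
          ≤ ∑ m, ∑ n, ‖h m i j n‖ ^ 2 * t m n ^ 2 := by
        refine Finset.sum_le_sum fun m _ => Finset.sum_le_sum fun n _ => ?_
        exact mul_le_mul_of_nonneg_left
          (pow_le_pow_left₀ (hη_nonneg m n) (hηt m n) 2) (sq_nonneg _)
      have hνr2 : ν (Real.sqrt (sigPow h W i j)) ^ 2 ≤ r i j ^ 2 :=
        pow_le_pow_left₀ (hν_nonneg i j) (hνr i j) 2
      -- the squared cone constraint
      have hsp : (0:ℝ) ≤ sigPow h W i j := Finset.sum_nonneg fun _ _ =>
        Finset.sum_nonneg fun _ _ => sq_nonneg _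
      have hT : (0:ℝ) ≤ ∑ m, ∑ n, ‖h m i j n‖ ^ 2 * t m n ^ 2 :=
        Finset.sum_nonneg fun _ _ => Finset.sum_nonneg fun _ _ =>
          mul_nonneg (sq_nonneg _) (sq_nonneg _)
      have hXnn : (0:ℝ) ≤ sigPow h W i j
          + (∑ m, ∑ n, ‖h m i j n‖ ^ 2 * t m n ^ 2) + r i j ^ 2 + σ2 := by
        have := sq_nonneg (r i j)
        linarith
      have h8 := hC i j
      have hsq : sigPow h W i j
            + (∑ m, ∑ n, ‖h m i j n‖ ^ 2 * t m n ^ 2) + r i j ^ 2 + σ2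
          ≤ (1 + 1 / Γ i j) * (dotc (h i i j) (fun n => W i n j)).re ^ 2 := by
        have h1 : Real.sqrt (sigPow h W i j
              + (∑ m, ∑ n, ‖h m i j n‖ ^ 2 * t m n ^ 2) + r i j ^ 2 + σ2) ^ 2
            ≤ (Real.sqrt (1 + 1 / Γ i j) * (dotc (h i i j) (fun n => W i n j)).re) ^ 2 :=
          pow_le_pow_left₀ (Real.sqrt_nonneg _) h8 2
        rw [Real.sq_sqrt hXnn, mul_pow,
          Real.sq_sqrt (le_of_lt (add_pos one_pos (one_div_pos.2 (hΓ i j))))] at h1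
        exact h1
      have hdecomp := aux_sigPow_decomp h W i j
      have heq : (1 + 1 / Γ i j) * (dotc (h i i j) (fun n => W i n j)).re ^ 2
          = (dotc (h i i j) (fun n => W i n j)).re ^ 2
            + (1 / Γ i j) * (dotc (h i i j) (fun n => W i n j)).re ^ 2 := by ring
      have e2 : (∑ l ∈ Finset.univ.filter (fun l => l ≠ j),
            ‖dotc (h i i j) (fun n => W i n l)‖ ^ 2)
          + (∑ m ∈ Finset.univ.filter (fun m => m ≠ i),
              ∑ k, ‖dotc (h m i j) (fun n => W m n k)‖ ^ 2)
          + (∑ m, ∑ n, ‖h m i j n‖ ^ 2 * η (rowNorm (W m) n) ^ 2)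
          + (σ2 + ν (Real.sqrt (sigPow h W i j)) ^ 2)
          ≤ (1 / Γ i j) * (dotc (h i i j) (fun n => W i n j)).re ^ 2 := by
        rw [heq] at hsq
        linarith
      have e3 := mul_le_mul_of_nonneg_left e2 (le_of_lt (hΓ i j))
      have e4 : Γ i j * ((1 / Γ i j) * (dotc (h i i j) (fun n => W i n j)).re ^ 2)
          = (dotc (h i i j) (fun n => W i n j)).re ^ 2 := by
        have hgne : Γ i j ≠ 0 := (hΓ i j).ne'
        field_simp
      rw [SINR, le_div_iff₀ hden]
      rw [e4] at e3
      linarith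
    · -- power constraints
      intro i k
      have hcoef : ∀ n : Fin Nt,
          0 ≤ δ * (Matrix.trace (Q i k * Matrix.single n n (1 : ℂ))).re := fun n => by
        rw [aux_trace_stdBasis]
        exact mul_nonneg hδ.1 (aux_psd_diag_re _ (hQ i k) n)
      have hsum : ∑ n, δ * (Matrix.trace (Q i k * Matrix.single n n (1 : ℂ))).re
              * η (rowNorm (W i) n) ^ 2
          ≤ ∑ n, δ * (Matrix.trace (Q i k * Matrix.single n n (1 : ℂ))).re
              * t i n ^ 2 := by
        refine Finset.sum_le_sum fun n _ => ?_
        exact mul_le_mul_of_nonneg_left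
          (pow_le_pow_left₀ (hη_nonneg i n) (hηt i n) 2) (hcoef n)
      linarith [hP i k]
end

section
/- In the multicell SINR model with receiver distortion function ν(x) = (κ/100)·x for some κ > 0, noise power σ² ≥ 0, and nonnegative transmitter distortion function η, the sum rate satisfies Σ_{i=1}^{N} Σ_{j=1}^{K} log₂(1 + SINR_{i,j}) ≤ N·K·log₂(1 + 10⁴/κ²) for every choice of channel vectors and beamforming matrices. In particular, the sum rate is bounded irrespective of the output power, so the asymptotic multiplexing gain under transceiver impairments is zero. -/
open scoped ComplexConjugate

/-- With a linear receiver distortion `ν(x) = (κ/100)·x`, the sum rate is bounded by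
`N·K·log₂(1 + 10⁴/κ²)` irrespective of the output power: the asymptotic multiplexing
gain under transceiver impairments is zero. -/
theorem stmt_15 {N K Nt : ℕ} (hN : 0 < N) (hK : 0 < K) (hNt : 0 < Nt)
    (κ : ℝ) (hκ : 0 < κ) (η ν : ℝ → ℝ)
    (hν : ∀ x : ℝ, ν x = κ / 100 * x)
    (σ2 : ℝ) (hσ : 0 ≤ σ2)
    (hη : ∀ x ∈ Set.Ici (0 : ℝ), 0 ≤ η x) :
    ∀ (h : Fin N → Fin N → Fin K → Fin Nt → ℂ)
      (W : Fin N → Matrix (Fin Nt) (Fin K) ℂ),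
      (∑ i, ∑ j, Real.logb 2 (1 + SINR η ν σ2 h W i j)) ≤
        (N : ℝ) * (K : ℝ) * Real.logb 2 (1 + 10 ^ 4 / κ ^ 2) := by
  intro h W
  have hB : (0:ℝ) ≤ 10 ^ 4 / κ ^ 2 := by positivity
  have key : ∀ i j, SINR η ν σ2 h W i j ≤ 10 ^ 4 / κ ^ 2 := by
    intro i j
    unfold SINR
    set num := ‖dotc (h i i j) (fun n => W i n j)‖ ^ 2 with hnumdef
    set s := sigPow h W i j with hsdef
    have hs0 : 0 ≤ s := by
      apply Finset.sum_nonneg; intro m _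
      apply Finset.sum_nonneg; intro k _; positivity
    have hnum : num ≤ s := by
      rw [hsdef]; unfold sigPow
      calc num ≤ ∑ k, ‖dotc (h i i j) (fun n => W i n k)‖ ^ 2 := by
            exact Finset.single_le_sum (f := fun k =>
              ‖dotc (h i i j) (fun n => W i n k)‖ ^ 2)
              (fun k _ => by positivity) (Finset.mem_univ j)
        _ ≤ _ := Finset.single_le_sum (f := fun m =>
              ∑ k, ‖dotc (h m i j) (fun n => W m n k)‖ ^ 2)
              (fun m _ => Finset.sum_nonneg fun k _ => by positivity) (Finset.mem_univ i)
    set D := (∑ l ∈ Finset.univ.filter (fun l => l ≠ j),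
        ‖dotc (h i i j) (fun n => W i n l)‖ ^ 2)
      + (∑ m ∈ Finset.univ.filter (fun m => m ≠ i),
          ∑ k, ‖dotc (h m i j) (fun n => W m n k)‖ ^ 2)
      + (∑ m, ∑ n, ‖h m i j n‖ ^ 2 * η (rowNorm (W m) n) ^ 2)
      + (σ2 + ν (Real.sqrt s) ^ 2) with hDdef
    have hν2 : ν (Real.sqrt s) ^ 2 = κ ^ 2 / 100 ^ 2 * s := by
      rw [hν, mul_pow, Real.sq_sqrt hs0, div_pow]
    have hDge : κ ^ 2 / 100 ^ 2 * s ≤ D := by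
      rw [hDdef, ← hν2]
      have h1 : 0 ≤ ∑ l ∈ Finset.univ.filter (fun l => l ≠ j),
          ‖dotc (h i i j) (fun n => W i n l)‖ ^ 2 :=
        Finset.sum_nonneg fun l _ => by positivity
      have h2 : 0 ≤ ∑ m ∈ Finset.univ.filter (fun m => m ≠ i),
          ∑ k, ‖dotc (h m i j) (fun n => W m n k)‖ ^ 2 :=
        Finset.sum_nonneg fun m _ => Finset.sum_nonneg fun k _ => by positivity
      have h3 : 0 ≤ ∑ m, ∑ n, ‖h m i j n‖ ^ 2 * η (rowNorm (W m) n) ^ 2 :=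
        Finset.sum_nonneg fun m _ => Finset.sum_nonneg fun n _ => by positivity
      nlinarith [sq_nonneg (ν (Real.sqrt s))]
    have hD0 : 0 ≤ D := le_trans (by positivity) hDge
    rcases eq_or_lt_of_le hD0 with hD | hD
    · rw [← hD, div_zero]; exact hB
    · rw [div_le_iff₀ hD]
      calc num ≤ s := hnum
        _ = 10 ^ 4 / κ ^ 2 * (κ ^ 2 / 100 ^ 2 * s) := by
            field_simp; ring
        _ ≤ 10 ^ 4 / κ ^ 2 * D := by
            apply mul_le_mul_of_nonneg_left hDge hB
  have hstep : ∀ i j, Real.logb 2 (1 + SINR η ν σ2 h W i j) ≤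
      Real.logb 2 (1 + 10 ^ 4 / κ ^ 2) := by
    intro i j
    have hpos : (0:ℝ) < 1 + SINR η ν σ2 h W i j := by
      have : 0 ≤ SINR η ν σ2 h W i j := by
        unfold SINR
        apply div_nonneg (by positivity)
        have hs0 : 0 ≤ sigPow h W i j := by
          apply Finset.sum_nonneg; intro m _
          apply Finset.sum_nonneg; intro k _; positivity
        have hν2 : 0 ≤ ν (Real.sqrt (sigPow h W i j)) ^ 2 := sq_nonneg _
        have h1 : 0 ≤ ∑ l ∈ Finset.univ.filter (fun l => l ≠ j),
            ‖dotc (h i i j) (fun n => W i n l)‖ ^ 2 :=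
          Finset.sum_nonneg fun l _ => by positivity
        have h2 : 0 ≤ ∑ m ∈ Finset.univ.filter (fun m => m ≠ i),
            ∑ k, ‖dotc (h m i j) (fun n => W m n k)‖ ^ 2 :=
          Finset.sum_nonneg fun m _ => Finset.sum_nonneg fun k _ => by positivity
        have h3 : 0 ≤ ∑ m, ∑ n, ‖h m i j n‖ ^ 2 * η (rowNorm (W m) n) ^ 2 :=
          Finset.sum_nonneg fun m _ => Finset.sum_nonneg fun n _ => by positivity
        linarith
      linarith
    exact Real.logb_le_logb_of_le (by norm_num) hpos (by linarith [key i j])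
  calc ∑ i, ∑ j, Real.logb 2 (1 + SINR η ν σ2 h W i j)
      ≤ ∑ i : Fin N, ∑ j : Fin K, Real.logb 2 (1 + 10 ^ 4 / κ ^ 2) := by
        exact Finset.sum_le_sum fun i _ => Finset.sum_le_sum fun j _ => hstep i j
    _ = (N : ℝ) * (K : ℝ) * Real.logb 2 (1 + 10 ^ 4 / κ ^ 2) := by
        simp [Finset.sum_const, Finset.card_univ]; ring
end
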